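/- Let (Ω,F,P) be a probability space, Y : ℕ → ℕ → Ω → ℝ a family of integrable random variables (potential outcomes), D : Ω → {0,1} measurable, and γ, T : Ω → ℕ measurable with T ≤ γ pointwise. Let 𝒢 = σ(γ) and ℋ = σ(D, T, γ), and assume the observed outcome Yobs(ω) := Y (D ω) (T ω) (ω) is measurable and integrable. Assume: (i) for all d ∈ {0,1} and t ∈ ℕ, E[Y d t | ℋ] = E[Y d t | 𝒢] almost surely; (ii) for all t ∈ ℕ, E[Y 1 t − Y 0 t | 𝒢] = E[Y 1 0 − Y 0 0 | 𝒢] almost everywhere on {t ≤ γ}. For t ≥ 1 set Λ_t := E[Y 0 t − Y 0 (t−1) | 𝒢]. Then, almost surely, E[Yobs | ℋ] = E[Y 0 0 | 𝒢] + Σ_{t=1}^{γ} 1{T ≥ t} · Λ_t + D · E[Y 1 0 − Y 0 0 | 𝒢]. -/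

import Mathlib

open MeasureTheory ProbabilityTheory

private lemma telescope_sum (f : ℕ → ℝ) (t : ℕ) :
    ∑ s ∈ Finset.Icc 1 t, (f s - f (s - 1)) = f t - f 0 := by
  induction t with
  | zero => simp
  | succ n ih =>
    rw [Finset.sum_Icc_succ_top (by omega), ih]
    simp

/-- Under randomization (i) and no interaction (ii), almost surely
`E[Yobs | σ(D,T,γ)] = E[Y 0 0 | σ(γ)] + Σ_{t=1}^{γ} 1{T ≥ t}·Λ_t + D·E[Y 1 0 − Y 0 0 | σ(γ)]`
where `Λ_t = E[Y 0 t − Y 0 (t−1) | σ(γ)]`. -/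
theorem stmt5
    {Ω : Type*} [MeasurableSpace Ω] (P : Measure Ω) [IsProbabilityMeasure P]
    (Y : ℕ → ℕ → Ω → ℝ) (hYint : ∀ d t, Integrable (Y d t) P)
    (D : Ω → ℕ) (hD01 : ∀ ω, D ω ≤ 1) (hDmeas : Measurable D)
    (γ T : Ω → ℕ) (hγmeas : Measurable γ) (hTmeas : Measurable T)
    (hTγ : ∀ ω, T ω ≤ γ ω)
    (Yobs : Ω → ℝ) (hYobs : ∀ ω, Yobs ω = Y (D ω) (T ω) ω)
    (hYobsmeas : Measurable Yobs) (hYobsint : Integrable Yobs P)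
    -- (i) randomization
    (hrand : ∀ d ≤ 1, ∀ t : ℕ,
      (P[Y d t | MeasurableSpace.comap (fun ω => (D ω, T ω, γ ω)) inferInstance])
        =ᵐ[P] (P[Y d t | MeasurableSpace.comap γ inferInstance]))
    -- (ii) no interaction between own treatment and others' treatments (A2)
    (hnoint : ∀ t : ℕ, ∀ᵐ ω ∂P, t ≤ γ ω →
      (P[fun ω' => Y 1 t ω' - Y 0 t ω' | MeasurableSpace.comap γ inferInstance]) ω
        = (P[fun ω' => Y 1 0 ω' - Y 0 0 ω' | MeasurableSpace.comap γ inferInstance]) ω) :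
    (P[Yobs | MeasurableSpace.comap (fun ω => (D ω, T ω, γ ω)) inferInstance])
      =ᵐ[P] fun ω =>
        (P[Y 0 0 | MeasurableSpace.comap γ inferInstance]) ω
        + (∑ t ∈ Finset.Icc 1 (γ ω), (if t ≤ T ω then (1 : ℝ) else 0) *
            (P[fun ω' => Y 0 t ω' - Y 0 (t - 1) ω' |
                MeasurableSpace.comap γ inferInstance]) ω)
        + (D ω : ℝ) *
          (P[fun ω' => Y 1 0 ω' - Y 0 0 ω' | MeasurableSpace.comap γ inferInstance]) ω := by
  set mG := MeasurableSpace.comap γ inferInstance with hmGdef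
  set mH := MeasurableSpace.comap (fun ω => (D ω, T ω, γ ω)) inferInstance with hmHdef
  -- key localization lemma
  have key : ∀ d ≤ 1, ∀ t : ℕ, ∀ᵐ ω ∂P, (D ω = d ∧ T ω = t) →
      (P[Yobs | mH]) ω = (P[Y d t | mG]) ω := by
    intro d hd t
    set A : Set Ω := {ω | D ω = d ∧ T ω = t} with hAdef
    have hA_H : MeasurableSet[mH] A := by
      refine ⟨{d} ×ˢ {t} ×ˢ Set.univ, by measurability, ?_⟩
      ext ω; simp [hAdef]
    have h1 : A.indicator Yobs = A.indicator (Y d t) := by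
      funext ω
      by_cases h : ω ∈ A
      · simp only [Set.indicator_of_mem h]
        obtain ⟨h1, h2⟩ := h
        rw [hYobs, h1, h2]
      · simp [Set.indicator_of_notMem h]
    have e1 := condExp_indicator (m := mH) hYobsint hA_H
    have e2 := condExp_indicator (m := mH) (hYint d t) hA_H
    rw [h1] at e1
    have e3 : A.indicator (P[Yobs | mH]) =ᵐ[P] A.indicator (P[Y d t | mH]) :=
      e1.symm.trans e2
    have e4 : A.indicator (P[Y d t | mH]) =ᵐ[P] A.indicator (P[Y d t | mG]) := by
      filter_upwards [hrand d hd t] with ω hω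
      by_cases h : ω ∈ A <;> simp [h, hω]
    filter_upwards [e3.trans e4] with ω hω hmem
    have : ω ∈ A := hmem
    simpa [Set.indicator_of_mem this] using hω
  have key0 : ∀ᵐ ω ∂P, ∀ t : ℕ, (D ω = 0 ∧ T ω = t) →
      (P[Yobs | mH]) ω = (P[Y 0 t | mG]) ω := ae_all_iff.2 (key 0 (by norm_num))
  have key1 : ∀ᵐ ω ∂P, ∀ t : ℕ, (D ω = 1 ∧ T ω = t) →
      (P[Yobs | mH]) ω = (P[Y 1 t | mG]) ω := ae_all_iff.2 (key 1 le_rfl)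
  have hsub0 : ∀ᵐ ω ∂P, ∀ t : ℕ,
      (P[fun ω' => Y 0 t ω' - Y 0 (t - 1) ω' | mG]) ω
        = (P[Y 0 t | mG]) ω - (P[Y 0 (t - 1) | mG]) ω := by
    refine ae_all_iff.2 fun t => ?_
    have := condExp_sub (m := mG) (μ := P) (hYint 0 t) (hYint 0 (t - 1))
    filter_upwards [this] with ω hω
    exact hω
  have hsub1 : ∀ᵐ ω ∂P, ∀ t : ℕ,
      (P[fun ω' => Y 1 t ω' - Y 0 t ω' | mG]) ω
        = (P[Y 1 t | mG]) ω - (P[Y 0 t | mG]) ω := by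
    refine ae_all_iff.2 fun t => ?_
    have := condExp_sub (m := mG) (μ := P) (hYint 1 t) (hYint 0 t)
    filter_upwards [this] with ω hω
    exact hω
  have hno : ∀ᵐ ω ∂P, ∀ t : ℕ, t ≤ γ ω →
      (P[fun ω' => Y 1 t ω' - Y 0 t ω' | mG]) ω
        = (P[fun ω' => Y 1 0 ω' - Y 0 0 ω' | mG]) ω := ae_all_iff.2 hnoint
  filter_upwards [key0, key1, hsub0, hsub1, hno] with ω h0 h1 hs0 hs1 hn
  -- simplify the sum on the RHS
  have hsum : (∑ t ∈ Finset.Icc 1 (γ ω), (if t ≤ T ω then (1 : ℝ) else 0) *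
      (P[fun ω' => Y 0 t ω' - Y 0 (t - 1) ω' | mG]) ω)
      = (P[Y 0 (T ω) | mG]) ω - (P[Y 0 0 | mG]) ω := by
    have h1 : ∀ t ∈ Finset.Icc 1 (γ ω), (if t ≤ T ω then (1 : ℝ) else 0) *
        (P[fun ω' => Y 0 t ω' - Y 0 (t - 1) ω' | mG]) ω
        = if t ≤ T ω then ((P[Y 0 t | mG]) ω - (P[Y 0 (t - 1) | mG]) ω) else 0 := by
      intro t _
      by_cases h : t ≤ T ω <;> simp [h, hs0 t]
    rw [Finset.sum_congr rfl h1, ← Finset.sum_filter]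
    have hset : (Finset.Icc 1 (γ ω)).filter (fun t => t ≤ T ω) = Finset.Icc 1 (T ω) := by
      ext s
      simp only [Finset.mem_filter, Finset.mem_Icc]
      have := hTγ ω
      omega
    rw [hset, telescope_sum (fun s => (P[Y 0 s | mG]) ω) (T ω)]
  rw [hsum]
  rcases Nat.le_one_iff_eq_zero_or_eq_one.mp (hD01 ω) with hd | hd
  · rw [h0 (T ω) ⟨hd, rfl⟩, hd]
    push_cast
    ring
  · rw [h1 (T ω) ⟨hd, rfl⟩, hd]
    have h2 := hn (T ω) (hTγ ω)
    rw [hs1 (T ω)] at h2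
    push_cast
    linarith
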